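/- For every natural number n, the complex-linear map φ* from the space of harmonic homogeneous polynomials of degree n in three complex variables (polynomials p ∈ ℂ[x,y,z], homogeneous of degree n, with Δp = ∂ₓ²p + ∂_y²p + ∂_z²p = 0) to the space of binary forms of degree 2n (homogeneous polynomials of degree 2n in two variables u, v over ℂ), defined by (φ*p)(u,v) := p((u² + v²)/2, (u² − v²)/(2i), i·u·v), is well defined (φ*p is homogeneous of degree 2n) and is a linear isomorphism (bijective). -/

import Mathlib

open MvPolynomial

/-- The pullback `φ*` along the Cartan map: substitute
`(x, y, z) ↦ ((u² + v²)/2, (u² − v²)/(2i), i·u·v)` in a polynomial of three complex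
variables, producing a polynomial in the two variables `u = X 0`, `v = X 1`. -/
noncomputable def cartanPullback (p : MvPolynomial (Fin 3) ℂ) : MvPolynomial (Fin 2) ℂ :=
  aeval
    ![C ((1 : ℂ) / 2) * (X 0 ^ 2 + X 1 ^ 2),
      C ((1 : ℂ) / (2 * Complex.I)) * (X 0 ^ 2 - X 1 ^ 2),
      C Complex.I * (X 0 * X 1)] p

open Finset

noncomputable section

def m3 (a b c : ℕ) : Fin 3 →₀ ℕ := Finsupp.single 0 a + Finsupp.single 1 b + Finsupp.single 2 c
def m2 (j k : ℕ) : Fin 2 →₀ ℕ := Finsupp.single 0 j + Finsupp.single 1 k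

@[simp] lemma m3_apply0 (a b c : ℕ) : m3 a b c 0 = a := by simp [m3, Finsupp.single_apply]
@[simp] lemma m3_apply1 (a b c : ℕ) : m3 a b c 1 = b := by simp [m3, Finsupp.single_apply]
@[simp] lemma m3_apply2 (a b c : ℕ) : m3 a b c 2 = c := by simp [m3, Finsupp.single_apply]
@[simp] lemma m2_apply0 (j k : ℕ) : m2 j k 0 = j := by simp [m2, Finsupp.single_apply]
@[simp] lemma m2_apply1 (j k : ℕ) : m2 j k 1 = k := by simp [m2, Finsupp.single_apply]

lemma m3_eta (d : Fin 3 →₀ ℕ) : m3 (d 0) (d 1) (d 2) = d := by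
  ext i; fin_cases i <;> simp
lemma m2_eta (d : Fin 2 →₀ ℕ) : m2 (d 0) (d 1) = d := by
  ext i; fin_cases i <;> simp

lemma m3_inj {a b c a' b' c' : ℕ} (h : m3 a b c = m3 a' b' c') : a = a' ∧ b = b' ∧ c = c' :=
  ⟨by simpa using congrArg (fun d => d 0) h, by simpa using congrArg (fun d => d 1) h,
   by simpa using congrArg (fun d => d 2) h⟩

lemma m2_inj {j k j' k' : ℕ} (h : m2 j k = m2 j' k') : j = j' ∧ k = k' :=
  ⟨by simpa using congrArg (fun d => d 0) h, by simpa using congrArg (fun d => d 1) h⟩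

lemma degree_fin {n : ℕ} (d : Fin n →₀ ℕ) : d.degree = ∑ i : Fin n, d i := by
  rw [Finsupp.degree]
  exact Finset.sum_subset (Finset.subset_univ _) (by intro x _ hx; simpa using hx)

lemma m3_degree (a b c : ℕ) : (m3 a b c).degree = a + b + c := by
  rw [degree_fin, Fin.sum_univ_three]; simp

lemma m2_degree (j k : ℕ) : (m2 j k).degree = j + k := by
  rw [degree_fin, Fin.sum_univ_two]; simp

lemma m3_add_s0 (a b c : ℕ) : m3 a b c + Finsupp.single 0 1 = m3 (a+1) b c := by
  ext i; fin_cases i <;> simp [Finsupp.single_apply]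
lemma m3_add_s1 (a b c : ℕ) : m3 a b c + Finsupp.single 1 1 = m3 a (b+1) c := by
  ext i; fin_cases i <;> simp [Finsupp.single_apply]
lemma m3_add_s2 (a b c : ℕ) : m3 a b c + Finsupp.single 2 1 = m3 a b (c+1) := by
  ext i; fin_cases i <;> simp [Finsupp.single_apply]

lemma coeff_pderiv {σ : Type*} [DecidableEq σ] (i : σ) (p : MvPolynomial σ ℂ) (d : σ →₀ ℕ) :
    coeff d (pderiv i p) = ((d i : ℂ) + 1) * coeff (d + Finsupp.single i 1) p := by
  induction p using MvPolynomial.induction_on' with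
  | monomial s r =>
    rw [pderiv_monomial]
    rcases Nat.eq_zero_or_pos (s i) with h | h
    · have h1 : coeff d (monomial (s - Finsupp.single i 1) (r * (s i : ℂ))) = 0 := by
        simp [h]
      have h2 : coeff (d + Finsupp.single i 1) (monomial s r) = 0 := by
        rw [coeff_monomial, if_neg]
        intro he; apply_fun (fun f => f i) at he; simp [h] at he
      simp [h1, h2]
    · rw [coeff_monomial, coeff_monomial]
      by_cases he : s - Finsupp.single i 1 = d
      · have he2 : s = d + Finsupp.single i 1 := by
          ext j
          by_cases hj : j = i
          · subst hj
            have := congrArg (fun f => f j) he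
            simp [Finsupp.single_apply] at this ⊢
            omega
          · have := congrArg (fun f => f j) he
            simp [Finsupp.single_apply, hj, Ne.symm hj] at this ⊢
            omega
        have hdi : (d i : ℂ) + 1 = (s i : ℂ) := by
          have : s i = d i + 1 := by rw [he2]; simp
          rw [this]; push_cast; ring
        rw [if_pos he, if_pos he2, hdi]; ring
      · have he2 : ¬ (d + Finsupp.single i 1 = s) := by
          intro hs; apply he; ext j; rw [← hs]; simp [Finsupp.single_apply]
        rw [if_neg he, if_neg (mt Eq.symm he2)]; ring
  | add p q hp hq => simp [map_add, hp, hq]; ring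

/-- The transformed Laplacian `4 ∂₀∂₁ + ∂₂²`. -/
def DD (p : MvPolynomial (Fin 3) ℂ) : MvPolynomial (Fin 3) ℂ :=
  C 4 * pderiv 0 (pderiv 1 p) + pderiv 2 (pderiv 2 p)

lemma coeff_DD (p : MvPolynomial (Fin 3) ℂ) (a b c : ℕ) :
    coeff (m3 a b c) (DD p) =
      4 * ((a:ℂ)+1) * ((b:ℂ)+1) * coeff (m3 (a+1) (b+1) c) p
      + ((c:ℂ)+1) * ((c:ℂ)+2) * coeff (m3 a b (c+2)) p := by
  rw [DD, coeff_add, coeff_C_mul, _root_.coeff_pderiv, _root_.coeff_pderiv, _root_.coeff_pderiv, _root_.coeff_pderiv]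
  rw [m3_add_s0, m3_add_s1, m3_add_s2, m3_add_s2]
  simp only [m3_apply0, m3_apply1, m3_apply2]
  push_cast; ring

/-- substitution s ↦ u², t ↦ v², z ↦ i·u·v -/
def θmap : MvPolynomial (Fin 3) ℂ →ₐ[ℂ] MvPolynomial (Fin 2) ℂ :=
  aeval ![X 0 ^ 2, X 1 ^ 2, C Complex.I * (X 0 * X 1)]

lemma monomial_m2 (j k : ℕ) (r : ℂ) :
    (monomial (m2 j k) r : MvPolynomial (Fin 2) ℂ) = C r * X 0 ^ j * X 1 ^ k := by
  rw [X_pow_eq_monomial, X_pow_eq_monomial, C_apply, monomial_mul, monomial_mul]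
  simp [m2]

lemma theta_monomial (a b c : ℕ) (r : ℂ) :
    θmap (monomial (m3 a b c) r) = monomial (m2 (2*a+c) (2*b+c)) (Complex.I ^ c * r) := by
  rw [θmap, aeval_monomial, monomial_m2]
  rw [Finsupp.prod_fintype _ _ (fun i => pow_zero _)]
  rw [Fin.prod_univ_three]
  simp only [m3, Finsupp.add_apply, Finsupp.single_apply]
  norm_num [Fin.ext_iff]
  rw [pow_add, pow_add]
  simp only [Matrix.cons_val, mul_pow]
  ring

def img (d : Fin 3 →₀ ℕ) : Fin 2 →₀ ℕ := m2 (2 * d 0 + d 2) (2 * d 1 + d 2)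

lemma theta_apply (p : MvPolynomial (Fin 3) ℂ) :
    θmap p = ∑ d ∈ p.support, monomial (img d) (Complex.I ^ (d 2) * coeff d p) := by
  conv_lhs => rw [p.as_sum]
  rw [map_sum]
  refine Finset.sum_congr rfl fun d _ => ?_
  conv_lhs => rw [← m3_eta d]
  rw [theta_monomial, m3_eta]
  rfl

lemma coeff_theta (p : MvPolynomial (Fin 3) ℂ) (e : Fin 2 →₀ ℕ) :
    coeff e (θmap p) =
      ∑ d ∈ p.support, if img d = e then Complex.I ^ (d 2) * coeff d p else 0 := by
  rw [theta_apply, coeff_sum]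
  exact Finset.sum_congr rfl fun d _ => coeff_monomial _ _ _

def tK (A B c₀ l : ℕ) : ℝ := ((4*(A-l)*(B-l) : ℕ) : ℝ) / (((c₀+2*l+1)*(c₀+2*l+2) : ℕ) : ℝ)
def tpr (A B c₀ m : ℕ) : ℝ := ∏ l ∈ Finset.range m, tK A B c₀ l

lemma tK_pos {A B c₀ l : ℕ} (h0 : l < A) (h1 : l < B) : 0 < tK A B c₀ l := by
  apply div_pos
  · have hA : 0 < A - l := by omega
    have hB : 0 < B - l := by omega
    norm_cast
    exact Nat.mul_pos (Nat.mul_pos (by norm_num) hA) hB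
  · norm_cast
    positivity

lemma tpr_pos {A B c₀ m : ℕ} (hm : m ≤ min A B) : 0 < tpr A B c₀ m := by
  apply Finset.prod_pos
  intro l hl
  exact tK_pos (by simp at hl ⊢; omega) (by simp at hl ⊢; omega)

lemma chain (p : MvPolynomial (Fin 3) ℂ)
    (hrec : ∀ a b c : ℕ, 4 * ((a:ℂ)+1) * ((b:ℂ)+1) * coeff (m3 (a+1) (b+1) c) p
      + ((c:ℂ)+1) * ((c:ℂ)+2) * coeff (m3 a b (c+2)) p = 0)
    (A B c₀ : ℕ) : ∀ m, m ≤ min A B →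
    Complex.I ^ (c₀ + 2*m) * coeff (m3 (A-m) (B-m) (c₀+2*m)) p
      = ((tpr A B c₀ m : ℝ) : ℂ) * (Complex.I ^ c₀ * coeff (m3 A B c₀) p) := by
  intro m
  induction m with
  | zero => simp [tpr]
  | succ m ih =>
    intro hm
    have hmA : m < A := by omega
    have hmB : m < B := by omega
    have ihm := ih (by omega)
    have h := hrec (A-m-1) (B-m-1) (c₀+2*m)
    have e1 : (A-m-1) + 1 = A - m := by omega
    have e2 : (B-m-1) + 1 = B - m := by omega
    have e3 : (c₀+2*m) + 2 = c₀ + 2*(m+1) := by omega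
    have e4 : A - m - 1 = A - (m+1) := by omega
    have e5 : B - m - 1 = B - (m+1) := by omega
    rw [e1, e2, e3, e4, e5] at h
    have c1 : ((A-(m+1) : ℕ) : ℂ) + 1 = ((A-m : ℕ) : ℂ) := by
      have : (A-(m+1)) + 1 = A - m := by omega
      rw [← this]; push_cast; ring
    have c2 : ((B-(m+1) : ℕ) : ℂ) + 1 = ((B-m : ℕ) : ℂ) := by
      have : (B-(m+1)) + 1 = B - m := by omega
      rw [← this]; push_cast; ring
    rw [c1, c2] at h
    -- h : 4 * (A-m) * (B-m) * coeff (m3 (A-m) (B-m) (c₀+2m)) p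
    --     + (c₀+2m+1) * (c₀+2m+2) * coeff (m3 (A-(m+1)) (B-(m+1)) (c₀+2(m+1))) p = 0
    have hden : ((c₀+2*m : ℕ) : ℂ) + 1 ≠ 0 := by
      norm_cast
    have hden2 : ((c₀+2*m : ℕ) : ℂ) + 2 ≠ 0 := by
      intro hh
      have : ((c₀+2*m+2 : ℕ) : ℂ) = 0 := by push_cast; push_cast at hh; linear_combination hh
      norm_cast at this
    have hIsq : Complex.I ^ (c₀ + 2*(m+1)) = -Complex.I ^ (c₀+2*m) := by
      have : c₀ + 2*(m+1) = (c₀ + 2*m) + 2 := by ring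
      rw [this, pow_add, Complex.I_sq]; ring
    have htK : ((tK A B c₀ m : ℝ) : ℂ)
        = 4 * ((A-m : ℕ):ℂ) * ((B-m : ℕ):ℂ) / ((((c₀+2*m:ℕ):ℂ)+1) * (((c₀+2*m:ℕ):ℂ)+2)) := by
      rw [tK]
      push_cast
      ring
    have htpr : tpr A B c₀ (m+1) = tpr A B c₀ m * tK A B c₀ m := by
      rw [tpr, tpr, Finset.prod_range_succ]
    set J := Complex.I ^ (c₀ + 2*m) with hJ
    set x := coeff (m3 (A-m) (B-m) (c₀+2*m)) p with hx
    set y := coeff (m3 (A-(m+1)) (B-(m+1)) (c₀+2*(m+1))) p with hy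
    set w := Complex.I ^ c₀ * coeff (m3 A B c₀) p with hw
    set T := ((tpr A B c₀ m : ℝ) : ℂ) with hT
    set α := ((A-m : ℕ):ℂ) with hα
    set β := ((B-m : ℕ):ℂ) with hβ
    set γ := ((c₀+2*m : ℕ):ℂ) with hγ
    have hne : ((γ+1) * (γ+2)) ≠ 0 := mul_ne_zero hden hden2
    have key : (-J*y) * ((γ+1)*(γ+2)) = T * (4*α*β) * w := by
      linear_combination (-J) * h + (4*α*β) * ihm
    rw [hIsq, htpr, Complex.ofReal_mul, htK]
    calc -J * y = ((-J*y) * ((γ+1)*(γ+2))) / ((γ+1)*(γ+2)) := by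
          rw [mul_div_cancel_right₀ _ hne]
      _ = (T * (4*α*β) * w) / ((γ+1)*(γ+2)) := by rw [key]
      _ = T * (4*α*β/((γ+1)*(γ+2))) * w := by ring

lemma fiber_char {A B c₀ : ℕ} (hc₀ : c₀ ≤ 1) (d : Fin 3 →₀ ℕ)
    (hd : img d = m2 (2*A+c₀) (2*B+c₀)) :
    ∃ m, m ≤ min A B ∧ d = m3 (A-m) (B-m) (c₀+2*m) := by
  obtain ⟨h1, h2⟩ := m2_inj hd
  -- h1 : 2 * d 0 + d 2 = 2*A+c₀, h2 : 2 * d 1 + d 2 = 2*B+c₀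
  obtain ⟨m, hm0, hm1, hm2, hmle⟩ :
      ∃ m, d 0 + m = A ∧ d 1 + m = B ∧ d 2 = c₀ + 2*m ∧ m ≤ min A B :=
    ⟨(d 2 - c₀)/2, by omega, by omega, by omega, by omega⟩
  refine ⟨m, hmle, ?_⟩
  conv_lhs => rw [← m3_eta d]
  rw [hm2, show d 0 = A - m by omega, show d 1 = B - m by omega]

lemma fiber_sum (p : MvPolynomial (Fin 3) ℂ) (A B c₀ : ℕ) (hc₀ : c₀ ≤ 1) :
    coeff (m2 (2*A+c₀) (2*B+c₀)) (θmap p)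
      = ∑ m ∈ Finset.range (min A B + 1),
          Complex.I ^ (c₀+2*m) * coeff (m3 (A-m) (B-m) (c₀+2*m)) p := by
  classical
  set e := m2 (2*A+c₀) (2*B+c₀) with he
  set emb : ℕ → (Fin 3 →₀ ℕ) := fun m => m3 (A-m) (B-m) (c₀+2*m) with hemb
  set f : (Fin 3 →₀ ℕ) → ℂ := fun d => if img d = e then Complex.I ^ (d 2) * coeff d p else 0
    with hf
  have hembinj : ∀ m ∈ Finset.range (min A B + 1), ∀ m' ∈ Finset.range (min A B + 1),
      emb m = emb m' → m = m' := by
    intro m _ m' _ hmm'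
    have := (m3_inj hmm').2.2
    omega
  set S := (Finset.range (min A B + 1)).image emb with hS
  have step1 : coeff e (θmap p) = ∑ d ∈ p.support ∪ S, f d := by
    rw [coeff_theta]
    refine Finset.sum_subset Finset.subset_union_left ?_
    intro d _ hd
    have : coeff d p = 0 := by
      by_contra hco
      exact hd (mem_support_iff.mpr hco)
    simp only [hf, this, mul_zero, ite_self]
  have step2 : ∑ d ∈ p.support ∪ S, f d = ∑ d ∈ S, f d := by
    refine (Finset.sum_subset Finset.subset_union_right ?_).symm
    intro d _ hdS
    simp only [hf]
    split
    · next himg =>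
      obtain ⟨m, hm, hdm⟩ := fiber_char hc₀ d himg
      exact absurd (Finset.mem_image.mpr ⟨m, Finset.mem_range.mpr (by omega), hdm.symm⟩) hdS
    · rfl
  have step3 : ∑ d ∈ S, f d = ∑ m ∈ Finset.range (min A B + 1), f (emb m) :=
    Finset.sum_image hembinj
  rw [step1, step2, step3]
  refine Finset.sum_congr rfl fun m hm => ?_
  have hmle : m ≤ min A B := by simpa using Nat.lt_succ_iff.mp (Finset.mem_range.mp hm)
  have himg : img (emb m) = e := by
    simp only [hemb, img, m3_apply0, m3_apply1, m3_apply2, he]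
    congr 1 <;> omega
  simp [hf, hemb, m3_apply2, show img (m3 (A-m) (B-m) (c₀+2*m)) = e from himg]

lemma core_inj (p : MvPolynomial (Fin 3) ℂ) (hD : DD p = 0) (hθ : θmap p = 0) : p = 0 := by
  have hrec : ∀ a b c : ℕ, 4 * ((a:ℂ)+1) * ((b:ℂ)+1) * coeff (m3 (a+1) (b+1) c) p
      + ((c:ℂ)+1) * ((c:ℂ)+2) * coeff (m3 a b (c+2)) p = 0 := by
    intro a b c
    have := congrArg (coeff (m3 a b c)) hD
    rw [coeff_DD] at this
    simpa using this
  have hbot : ∀ A B c₀, c₀ ≤ 1 → coeff (m3 A B c₀) p = 0 := by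
    intro A B c₀ hc₀
    have hsum := fiber_sum p A B c₀ hc₀
    rw [hθ] at hsum
    simp only [coeff_zero] at hsum
    have hsum2 : (0:ℂ) = ∑ m ∈ Finset.range (min A B + 1),
        ((tpr A B c₀ m : ℝ) : ℂ) * (Complex.I ^ c₀ * coeff (m3 A B c₀) p) := by
      rw [hsum]
      refine Finset.sum_congr rfl fun m hm => ?_
      exact chain p hrec A B c₀ m (by simpa using Nat.lt_succ_iff.mp (Finset.mem_range.mp hm))
    rw [← Finset.sum_mul] at hsum2
    have hTpos : (0:ℝ) < ∑ m ∈ Finset.range (min A B + 1), tpr A B c₀ m := by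
      apply Finset.sum_pos
      · intro m hm
        exact tpr_pos (by simpa using Nat.lt_succ_iff.mp (Finset.mem_range.mp hm))
      · exact ⟨0, Finset.mem_range.mpr (by omega)⟩
    have hTne : (((∑ m ∈ Finset.range (min A B + 1), tpr A B c₀ m : ℝ)) : ℂ) ≠ 0 := by
      simp only [ne_eq, Complex.ofReal_eq_zero]
      exact ne_of_gt hTpos
    rw [← Complex.ofReal_sum] at hsum2
    rcases mul_eq_zero.mp hsum2.symm with h | h
    · exact absurd h hTne
    · rcases mul_eq_zero.mp h with h' | h'
      · exact absurd h' (pow_ne_zero _ Complex.I_ne_zero)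
      · exact h'
  ext d
  rw [← m3_eta d, coeff_zero]
  set a := d 0; set b := d 1; set c := d 2
  set c₀ := c % 2 with hc₀def
  set m := c / 2 with hmdef
  have hch := chain p hrec (a + m) (b + m) c₀ m (by omega)
  have h1 : (a+m) - m = a := by omega
  have h2 : (b+m) - m = b := by omega
  have h3 : c₀ + 2*m = c := by omega
  rw [h1, h2, h3] at hch
  have hb := hbot (a+m) (b+m) c₀ (by omega)
  rw [hb] at hch
  simp only [mul_zero] at hch
  have hI : Complex.I ^ c ≠ 0 := pow_ne_zero _ Complex.I_ne_zero
  exact (mul_eq_zero.mp hch).resolve_left hI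


lemma DD_add (p q : MvPolynomial (Fin 3) ℂ) : DD (p + q) = DD p + DD q := by
  simp [DD, map_add]; ring
lemma DD_smul (c : ℂ) (p : MvPolynomial (Fin 3) ℂ) : DD (c • p) = c • DD p := by
  simp [DD, map_smul, smul_add, mul_smul_comm]

def Tsum (A B c₀ : ℕ) : ℝ := ∑ m ∈ Finset.range (min A B + 1), tpr A B c₀ m

def DDl : MvPolynomial (Fin 3) ℂ →ₗ[ℂ] MvPolynomial (Fin 3) ℂ where
  toFun := DD
  map_add' := DD_add
  map_smul' := DD_smul

lemma Tsum_pos (A B c₀ : ℕ) : 0 < Tsum A B c₀ := by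
  apply Finset.sum_pos
  · intro m hm
    exact tpr_pos (by simpa using Nat.lt_succ_iff.mp (Finset.mem_range.mp hm))
  · exact ⟨0, Finset.mem_range.mpr (by omega)⟩

def PPgen (A B c₀ : ℕ) : MvPolynomial (Fin 3) ℂ :=
  ∑ m ∈ Finset.range (min A B + 1),
    monomial (m3 (A-m) (B-m) (c₀+2*m)) ((-1:ℂ)^m * ((tpr A B c₀ m : ℝ) : ℂ))

lemma PPgen_homog (A B c₀ : ℕ) : (PPgen A B c₀).IsHomogeneous (A+B+c₀) := by
  apply IsHomogeneous.sum
  intro m hm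
  apply isHomogeneous_monomial
  rw [m3_degree]
  have : m ≤ min A B := by simpa using Nat.lt_succ_iff.mp (Finset.mem_range.mp hm)
  omega

lemma theta_PPgen (A B c₀ : ℕ) :
    θmap (PPgen A B c₀)
      = monomial (m2 (2*A+c₀) (2*B+c₀)) (Complex.I ^ c₀ * ((Tsum A B c₀ : ℝ) : ℂ)) := by
  rw [PPgen, map_sum]
  rw [Tsum, Complex.ofReal_sum, Finset.mul_sum, map_sum]
  refine Finset.sum_congr rfl fun m hm => ?_
  have hmle : m ≤ min A B := by simpa using Nat.lt_succ_iff.mp (Finset.mem_range.mp hm)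
  rw [theta_monomial]
  have e1 : 2*(A-m)+(c₀+2*m) = 2*A+c₀ := by omega
  have e2 : 2*(B-m)+(c₀+2*m) = 2*B+c₀ := by omega
  rw [e1, e2]
  congr 1
  have : Complex.I ^ (c₀+2*m) = Complex.I ^ c₀ * (-1)^m := by
    rw [pow_add, pow_mul, Complex.I_sq]
  rw [this]
  have h4 : ((-1:ℂ))^m * ((-1:ℂ))^m = 1 := by
    rw [← pow_add, ← two_mul, pow_mul]; norm_num
  linear_combination (Complex.I ^ c₀ * ((tpr A B c₀ m : ℝ) : ℂ)) * h4

lemma coeff_PPgen (A B c₀ a b c : ℕ) :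
    coeff (m3 a b c) (PPgen A B c₀)
      = ∑ m ∈ Finset.range (min A B + 1),
          if m3 (A-m) (B-m) (c₀+2*m) = m3 a b c
          then (-1:ℂ)^m * ((tpr A B c₀ m : ℝ) : ℂ) else 0 := by
  rw [PPgen, coeff_sum]
  exact Finset.sum_congr rfl fun m _ => coeff_monomial _ _ _

lemma coeff_PPgen_on (A B c₀ : ℕ) {m : ℕ} (hm : m ≤ min A B) :
    coeff (m3 (A-m) (B-m) (c₀+2*m)) (PPgen A B c₀)
      = (-1:ℂ)^m * ((tpr A B c₀ m : ℝ) : ℂ) := by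
  rw [coeff_PPgen]
  rw [Finset.sum_eq_single m]
  · rw [if_pos rfl]
  · intro m' _ hm'
    rw [if_neg]
    intro h
    have := (m3_inj h).2.2
    omega
  · intro h
    exact absurd (Finset.mem_range.mpr (by omega)) h

lemma coeff_PPgen_off (A B c₀ a b c : ℕ)
    (h : ∀ m, m ≤ min A B → ¬(A = a + m ∧ B = b + m ∧ c = c₀ + 2*m)) :
    coeff (m3 a b c) (PPgen A B c₀) = 0 := by
  rw [coeff_PPgen]
  apply Finset.sum_eq_zero
  intro m hm
  have hmle : m ≤ min A B := by simpa using Nat.lt_succ_iff.mp (Finset.mem_range.mp hm)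
  rw [if_neg]
  intro he
  obtain ⟨h1, h2, h3⟩ := m3_inj he
  exact h m hmle ⟨by omega, by omega, by omega⟩

lemma DD_PPgen (A B c₀ : ℕ) (hc₀ : c₀ ≤ 1) : DD (PPgen A B c₀) = 0 := by
  ext d
  rw [coeff_zero, ← m3_eta d, coeff_DD]
  set a := d 0 with ha; set b := d 1 with hb; set c := d 2 with hc
  by_cases hon : ∃ m, m ≤ min A B ∧ A = (a+1) + m ∧ B = (b+1) + m ∧ c = c₀ + 2*m
  · obtain ⟨m, hm, hA, hB, hcm⟩ := hon
    have hm1 : m + 1 ≤ min A B := by omega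
    have r1 : m3 (a+1) (b+1) c = m3 (A-m) (B-m) (c₀+2*m) := by
      rw [show a+1 = A-m by omega, show b+1 = B-m by omega, show c = c₀+2*m from hcm]
    have r2 : m3 a b (c+2) = m3 (A-(m+1)) (B-(m+1)) (c₀+2*(m+1)) := by
      rw [show a = A-(m+1) by omega, show b = B-(m+1) by omega, show c+2 = c₀+2*(m+1) by omega]
    rw [r1, r2, coeff_PPgen_on A B c₀ hm, coeff_PPgen_on A B c₀ hm1]
    have htpr : tpr A B c₀ (m+1) = tpr A B c₀ m * tK A B c₀ m := by
      rw [tpr, tpr, Finset.prod_range_succ]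
    have htK : ((tK A B c₀ m : ℝ) : ℂ)
        = 4 * ((A-m : ℕ):ℂ) * ((B-m : ℕ):ℂ) / ((((c₀+2*m+1:ℕ)):ℂ) * (((c₀+2*m+2:ℕ)):ℂ)) := by
      rw [tK]; push_cast; ring
    have hden1 : (((c₀+2*m+1 : ℕ)):ℂ) ≠ 0 := by norm_cast
    have hden2 : (((c₀+2*m+2 : ℕ)):ℂ) ≠ 0 := by norm_cast
    have ca : ((a:ℂ)+1) = ((A-m : ℕ):ℂ) := by
      rw [show A-m = a+1 by omega]; push_cast; ring
    have cb : ((b:ℂ)+1) = ((B-m : ℕ):ℂ) := by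
      rw [show B-m = b+1 by omega]; push_cast; ring
    have cc1 : ((c:ℂ)+1) = ((c₀+2*m+1 : ℕ):ℂ) := by
      rw [show c₀+2*m+1 = c+1 by omega]; push_cast; ring
    have cc2 : ((c:ℂ)+2) = ((c₀+2*m+2 : ℕ):ℂ) := by
      rw [show c₀+2*m+2 = c+2 by omega]; push_cast; ring
    rw [ca, cb, cc1, cc2, htpr, pow_succ, Complex.ofReal_mul]
    have hDne : (((c₀+2*m+1:ℕ)):ℂ) * (((c₀+2*m+2:ℕ)):ℂ) ≠ 0 := mul_ne_zero hden1 hden2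
    have hmul : ((tK A B c₀ m : ℝ) : ℂ) * ((((c₀+2*m+1:ℕ)):ℂ) * (((c₀+2*m+2:ℕ)):ℂ))
        = 4 * ((A-m : ℕ):ℂ) * ((B-m : ℕ):ℂ) := by
      rw [htK]; exact div_mul_cancel₀ _ hDne
    linear_combination (-((-1:ℂ)^m * ((tpr A B c₀ m : ℝ) : ℂ))) * hmul
  · push_neg at hon
    have z1 : coeff (m3 (a+1) (b+1) c) (PPgen A B c₀) = 0 := by
      apply coeff_PPgen_off
      intro m hm hcontra
      exact hon m hm hcontra.1 hcontra.2.1 hcontra.2.2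
    have z2 : coeff (m3 a b (c+2)) (PPgen A B c₀) = 0 := by
      apply coeff_PPgen_off
      intro m' hm' hcontra
      obtain ⟨h1, h2, h3⟩ := hcontra
      have hm'1 : 1 ≤ m' := by omega
      exact hon (m'-1) (by omega) (by omega) (by omega) (by omega)
    rw [z1, z2]
    ring

lemma core_surj (n : ℕ) (q : MvPolynomial (Fin 2) ℂ) (hq : q.IsHomogeneous (2*n)) :
    ∃ w : MvPolynomial (Fin 3) ℂ, w.IsHomogeneous n ∧ DD w = 0 ∧ θmap w = q := by
  classical
  refine ⟨∑ e ∈ q.support,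
      (coeff e q / (Complex.I ^ (e 0 % 2) * ((Tsum (e 0 / 2) (e 1 / 2) (e 0 % 2) : ℝ) : ℂ)))
        • PPgen (e 0 / 2) (e 1 / 2) (e 0 % 2), ?_, ?_, ?_⟩
  · apply IsHomogeneous.sum
    intro e he
    have hdeg : e 0 + e 1 = 2*n := by
      have h := hq (mem_support_iff.mp he)
      have h2 : e.degree = 2*n := by rw [Finsupp.degree_eq_weight_one]; exact h
      rw [degree_fin, Fin.sum_univ_two] at h2
      exact h2
    rw [smul_eq_C_mul]
    apply IsHomogeneous.C_mul
    have := PPgen_homog (e 0 / 2) (e 1 / 2) (e 0 % 2)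
    have heq : e 0 / 2 + e 1 / 2 + e 0 % 2 = n := by omega
    rwa [heq] at this
  · rw [show (DD : MvPolynomial (Fin 3) ℂ → MvPolynomial (Fin 3) ℂ)
        (∑ e ∈ q.support, (coeff e q / (Complex.I ^ (e 0 % 2)
          * ((Tsum (e 0 / 2) (e 1 / 2) (e 0 % 2) : ℝ) : ℂ)))
            • PPgen (e 0 / 2) (e 1 / 2) (e 0 % 2)) = DDl
        (∑ e ∈ q.support, (coeff e q / (Complex.I ^ (e 0 % 2)
          * ((Tsum (e 0 / 2) (e 1 / 2) (e 0 % 2) : ℝ) : ℂ)))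
            • PPgen (e 0 / 2) (e 1 / 2) (e 0 % 2)) from rfl]
    rw [map_sum]
    apply Finset.sum_eq_zero
    intro e he
    rw [map_smul]
    have hz : DDl (PPgen (e 0 / 2) (e 1 / 2) (e 0 % 2)) = 0 := by
      show DD _ = 0
      exact DD_PPgen _ _ _ (by omega)
    rw [hz, smul_zero]
  · rw [map_sum]
    conv_rhs => rw [q.as_sum]
    refine Finset.sum_congr rfl fun e he => ?_
    have hdeg : e 0 + e 1 = 2*n := by
      have h := hq (mem_support_iff.mp he)
      have h2 : e.degree = 2*n := by rw [Finsupp.degree_eq_weight_one]; exact h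
      rw [degree_fin, Fin.sum_univ_two] at h2
      exact h2
    rw [map_smul, theta_PPgen]
    have h0 : 2 * (e 0 / 2) + e 0 % 2 = e 0 := by omega
    have h1 : 2 * (e 1 / 2) + e 0 % 2 = e 1 := by omega
    rw [h0, h1, m2_eta, smul_monomial]
    congr 1
    have hTne : ((Tsum (e 0 / 2) (e 1 / 2) (e 0 % 2) : ℝ) : ℂ) ≠ 0 := by
      simp only [ne_eq, Complex.ofReal_eq_zero]
      exact ne_of_gt (Tsum_pos _ _ _)
    have hIne : Complex.I ^ (e 0 % 2) ≠ 0 := pow_ne_zero _ Complex.I_ne_zero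
    rw [smul_eq_mul]
    field_simp


lemma pderiv_aeval {n m : ℕ} (f : Fin n → MvPolynomial (Fin m) ℂ) (i : Fin m)
    (p : MvPolynomial (Fin n) ℂ) :
    pderiv i (aeval f p) = ∑ j, aeval f (pderiv j p) * pderiv i (f j) := by
  induction p using MvPolynomial.induction_on with
  | C a => simp
  | add p q hp hq =>
    rw [map_add, map_add, hp, hq, ← Finset.sum_add_distrib]
    exact Finset.sum_congr rfl fun j _ => by simp [map_add, add_mul]
  | mul_X p j hp =>
    rw [map_mul, aeval_X, pderiv_mul, hp, Finset.sum_mul]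
    have key : ∀ j' : Fin n, aeval f (pderiv j' (p * X j)) * pderiv i (f j')
        = aeval f (pderiv j' p) * pderiv i (f j') * f j
          + (if j' = j then aeval f p * pderiv i (f j) else 0) := by
      intro j'
      rw [pderiv_mul]
      by_cases hj : j' = j
      · subst hj
        rw [if_pos rfl, pderiv_X_self]
        simp [map_add, map_mul, aeval_X]
        ring
      · rw [if_neg hj, pderiv_X_of_ne (Ne.symm hj)]
        simp [map_add, map_mul, aeval_X]
        ring
    rw [Finset.sum_congr rfl fun j' _ => key j']
    rw [Finset.sum_add_distrib, Finset.sum_ite_eq' Finset.univ j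
      (fun _ => aeval f p * pderiv i (f j))]
    simp [mul_comm]

lemma pderiv_comm {i j : Fin 3} (p : MvPolynomial (Fin 3) ℂ) :
    pderiv i (pderiv j p) = pderiv j (pderiv i p) := by
  ext d
  rw [_root_.coeff_pderiv, _root_.coeff_pderiv, _root_.coeff_pderiv, _root_.coeff_pderiv]
  rw [add_right_comm d (Finsupp.single j 1) (Finsupp.single i 1)]
  by_cases hij : i = j
  · subst hij; ring
  · simp only [Finsupp.add_apply, Finsupp.single_apply, if_neg hij, if_neg (Ne.symm hij)]
    push_cast
    ring

def σmap : MvPolynomial (Fin 3) ℂ →ₐ[ℂ] MvPolynomial (Fin 3) ℂ :=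
  aeval ![X 0 + C Complex.I * X 1, X 0 - C Complex.I * X 1, X 2]
def τmap : MvPolynomial (Fin 3) ℂ →ₐ[ℂ] MvPolynomial (Fin 3) ℂ :=
  aeval ![C ((1:ℂ)/2) * (X 0 + X 1), C (1/(2*Complex.I)) * (X 0 - X 1), X 2]

lemma σmap_X0 : σmap (X 0) = X 0 + C Complex.I * X 1 := by simp [σmap]
lemma σmap_X1 : σmap (X 1) = X 0 - C Complex.I * X 1 := by simp [σmap]
lemma σmap_X2 : σmap (X 2) = X 2 := by simp [σmap]
lemma σmap_C (r : ℂ) : σmap (C r) = C r := by simp [σmap]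
lemma τmap_X0 : τmap (X 0) = C ((1:ℂ)/2) * (X 0 + X 1) := by simp [τmap]
lemma τmap_X1 : τmap (X 1) = C (1/(2*Complex.I)) * (X 0 - X 1) := by simp [τmap]
lemma τmap_X2 : τmap (X 2) = X 2 := by simp [τmap]
lemma τmap_C (r : ℂ) : τmap (C r) = C r := by simp [τmap]

lemma τ_σ (p : MvPolynomial (Fin 3) ℂ) : τmap (σmap p) = p := by
  have h : τmap.comp σmap = AlgHom.id ℂ _ := by
    apply MvPolynomial.algHom_ext
    intro i
    fin_cases i
    · show τmap (σmap (X 0)) = X 0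
      rw [σmap_X0, map_add, map_mul, τmap_C, τmap_X0, τmap_X1]
      simp only [← smul_eq_C_mul]
      match_scalars <;> (field_simp; try ring)
    · show τmap (σmap (X 1)) = X 1
      rw [σmap_X1, map_sub, map_mul, τmap_C, τmap_X0, τmap_X1]
      simp only [← smul_eq_C_mul]
      match_scalars <;> (field_simp; try ring)
    · show τmap (σmap (X 2)) = X 2
      rw [σmap_X2, τmap_X2]
  exact congrFun (congrArg DFunLike.coe h) p

lemma σ_τ (p : MvPolynomial (Fin 3) ℂ) : σmap (τmap p) = p := by
  have h : σmap.comp τmap = AlgHom.id ℂ _ := by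
    apply MvPolynomial.algHom_ext
    intro i
    fin_cases i
    · show σmap (τmap (X 0)) = X 0
      rw [τmap_X0, map_mul, σmap_C, map_add, σmap_X0, σmap_X1]
      simp only [← smul_eq_C_mul]
      match_scalars <;> (field_simp; try ring)
    · show σmap (τmap (X 1)) = X 1
      rw [τmap_X1, map_mul, σmap_C, map_sub, σmap_X0, σmap_X1]
      simp only [← smul_eq_C_mul]
      match_scalars <;> (field_simp; try ring)
    · show σmap (τmap (X 2)) = X 2
      rw [τmap_X2, σmap_X2]
  exact congrFun (congrArg DFunLike.coe h) p

lemma cartan_σ (p : MvPolynomial (Fin 3) ℂ) : cartanPullback (σmap p) = θmap p := by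
  have h : (aeval
      ![C ((1 : ℂ) / 2) * (X 0 ^ 2 + X 1 ^ 2),
        C ((1 : ℂ) / (2 * Complex.I)) * (X 0 ^ 2 - X 1 ^ 2),
        C Complex.I * (X 0 * X 1)] : MvPolynomial (Fin 3) ℂ →ₐ[ℂ] MvPolynomial (Fin 2) ℂ).comp
      σmap = θmap := by
    apply MvPolynomial.algHom_ext
    intro i
    fin_cases i
    · simp only [AlgHom.comp_apply, Fin.zero_eta, Fin.mk_one, Fin.reduceFinMk]
      show (aeval ![C ((1 : ℂ) / 2) * (X 0 ^ 2 + X 1 ^ 2),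
          C ((1 : ℂ) / (2 * Complex.I)) * (X 0 ^ 2 - X 1 ^ 2),
          C Complex.I * (X 0 * X 1)] : MvPolynomial (Fin 3) ℂ →ₐ[ℂ] MvPolynomial (Fin 2) ℂ) (σmap (X 0)) = θmap (X 0)
      rw [σmap_X0, map_add, map_mul, aeval_C, aeval_X, aeval_X]
      rw [show θmap (X 0) = X 0 ^ 2 by simp [θmap]]
      simp only [Matrix.cons_val_zero, Matrix.cons_val_one, Matrix.head_cons, algebraMap_eq]
      simp only [← smul_eq_C_mul]
      match_scalars <;> (field_simp; try ring)
    · simp only [AlgHom.comp_apply, Fin.zero_eta, Fin.mk_one, Fin.reduceFinMk]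
      show (aeval ![C ((1 : ℂ) / 2) * (X 0 ^ 2 + X 1 ^ 2),
          C ((1 : ℂ) / (2 * Complex.I)) * (X 0 ^ 2 - X 1 ^ 2),
          C Complex.I * (X 0 * X 1)] : MvPolynomial (Fin 3) ℂ →ₐ[ℂ] MvPolynomial (Fin 2) ℂ) (σmap (X 1)) = θmap (X 1)
      rw [σmap_X1, map_sub, map_mul, aeval_C, aeval_X, aeval_X]
      rw [show θmap (X 1) = X 1 ^ 2 by simp [θmap]]
      simp only [Matrix.cons_val_zero, Matrix.cons_val_one, Matrix.head_cons, algebraMap_eq]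
      simp only [← smul_eq_C_mul]
      match_scalars <;> (field_simp; try ring)
    · simp only [AlgHom.comp_apply, Fin.zero_eta, Fin.mk_one, Fin.reduceFinMk]
      show (aeval ![C ((1 : ℂ) / 2) * (X 0 ^ 2 + X 1 ^ 2),
          C ((1 : ℂ) / (2 * Complex.I)) * (X 0 ^ 2 - X 1 ^ 2),
          C Complex.I * (X 0 * X 1)] : MvPolynomial (Fin 3) ℂ →ₐ[ℂ] MvPolynomial (Fin 2) ℂ) (σmap (X 2)) = θmap (X 2)
      rw [σmap_X2, aeval_X]
      rw [show θmap (X 2) = C Complex.I * (X 0 * X 1) by simp [θmap]]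
      simp
  exact congrFun (congrArg DFunLike.coe h) p

def σf : Fin 3 → MvPolynomial (Fin 3) ℂ := ![X 0 + C Complex.I * X 1, X 0 - C Complex.I * X 1, X 2]

lemma σmap_eq_aeval (p : MvPolynomial (Fin 3) ℂ) : σmap p = aeval σf p := rfl

lemma pderiv_σ0 (p : MvPolynomial (Fin 3) ℂ) :
    pderiv 0 (σmap p) = σmap (pderiv 0 p) + σmap (pderiv 1 p) := by
  rw [σmap_eq_aeval, pderiv_aeval, Fin.sum_univ_three]
  rw [σmap_eq_aeval, σmap_eq_aeval]
  have h0 : pderiv 0 (σf 0) = 1 := by simp [σf]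
  have h1 : pderiv 0 (σf 1) = 1 := by simp [σf]
  have h2 : pderiv 0 (σf 2) = 0 := by simp [σf, pderiv_X_of_ne]
  rw [h0, h1, h2]
  ring

lemma pderiv_σ1 (p : MvPolynomial (Fin 3) ℂ) :
    pderiv 1 (σmap p) = C Complex.I * (σmap (pderiv 0 p) - σmap (pderiv 1 p)) := by
  rw [σmap_eq_aeval, pderiv_aeval, Fin.sum_univ_three]
  rw [σmap_eq_aeval, σmap_eq_aeval]
  have h0 : pderiv 1 (σf 0) = C Complex.I := by simp [σf, pderiv_X_of_ne]
  have h1 : pderiv 1 (σf 1) = -C Complex.I := by simp [σf, pderiv_X_of_ne]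
  have h2 : pderiv 1 (σf 2) = 0 := by simp [σf, pderiv_X_of_ne]
  rw [h0, h1, h2]
  ring

lemma pderiv_σ2 (p : MvPolynomial (Fin 3) ℂ) :
    pderiv 2 (σmap p) = σmap (pderiv 2 p) := by
  rw [σmap_eq_aeval, pderiv_aeval, Fin.sum_univ_three]
  rw [σmap_eq_aeval]
  have h0 : pderiv 2 (σf 0) = 0 := by simp [σf, pderiv_X_of_ne]
  have h1 : pderiv 2 (σf 1) = 0 := by simp [σf, pderiv_X_of_ne]
  have h2 : pderiv 2 (σf 2) = 1 := by simp [σf]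
  rw [h0, h1, h2]
  ring

lemma lap_σ (p : MvPolynomial (Fin 3) ℂ) :
    (∑ i : Fin 3, pderiv i (pderiv i (σmap p))) = σmap (DD p) := by
  rw [Fin.sum_univ_three]
  rw [pderiv_σ0, pderiv_σ1, pderiv_σ2]
  rw [map_add, pderiv_σ0, pderiv_σ0, pderiv_C_mul, map_sub, pderiv_σ1, pderiv_σ1, pderiv_σ2]
  rw [DD, map_add, map_mul, σmap_C]
  set w00 := σmap (pderiv 0 (pderiv 0 p))
  set w10 := σmap (pderiv 1 (pderiv 0 p))
  set w01 := σmap (pderiv 0 (pderiv 1 p))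
  set w11 := σmap (pderiv 1 (pderiv 1 p))
  have hcomm : w10 = w01 := congrArg σmap (pderiv_comm p)
  have hI : (C Complex.I : MvPolynomial (Fin 3) ℂ) * C Complex.I = -1 := by
    rw [← C_mul, Complex.I_mul_I, map_neg, map_one]
  rw [hcomm]
  have hC4 : (C (4:ℂ) : MvPolynomial (Fin 3) ℂ) = 4 := by
    rw [show (4:ℂ) = ((4:ℕ):ℂ) by norm_num, C_eq_coe_nat]; norm_num
  linear_combination (w00 - w01 - w01 + w11) * hI - w01 * hC4

lemma homog_comp_aux {g : MvPolynomial (Fin 3) ℂ →ₐ[ℂ] MvPolynomial (Fin 3) ℂ}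
    {v : Fin 3 → MvPolynomial (Fin 3) ℂ} (hg : g = aeval v)
    (hv : ∀ i, (v i).IsHomogeneous 1) {p : MvPolynomial (Fin 3) ℂ} {n : ℕ}
    (hp : p.IsHomogeneous n) : (g p).IsHomogeneous n := by
  rw [hg]
  simpa using hp.aeval v hv

lemma σ_homog {p : MvPolynomial (Fin 3) ℂ} {n : ℕ} (hp : p.IsHomogeneous n) :
    (σmap p).IsHomogeneous n := by
  apply homog_comp_aux (g := σmap) rfl _ hp
  intro i
  fin_cases i
  · exact (isHomogeneous_X _ _).add ((isHomogeneous_X _ _).C_mul _)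
  · exact (isHomogeneous_X _ _).sub ((isHomogeneous_X _ _).C_mul _)
  · exact isHomogeneous_X _ _
lemma τ_homog {p : MvPolynomial (Fin 3) ℂ} {n : ℕ} (hp : p.IsHomogeneous n) :
    (τmap p).IsHomogeneous n := by
  apply homog_comp_aux (g := τmap) rfl _ hp
  intro i
  fin_cases i
  · exact ((isHomogeneous_X _ _).add (isHomogeneous_X _ _)).C_mul _
  · exact ((isHomogeneous_X _ _).sub (isHomogeneous_X _ _)).C_mul _
  · exact isHomogeneous_X _ _

lemma cartan_homog {p : MvPolynomial (Fin 3) ℂ} {n : ℕ} (hp : p.IsHomogeneous n) :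
    (cartanPullback p).IsHomogeneous (2 * n) := by
  rw [cartanPullback]
  apply hp.aeval
  intro i
  fin_cases i
  · exact ((isHomogeneous_X_pow _ _).add (isHomogeneous_X_pow _ _)).C_mul _
  · exact ((isHomogeneous_X_pow _ _).sub (isHomogeneous_X_pow _ _)).C_mul _
  · have : ((X 0 * X 1 : MvPolynomial (Fin 2) ℂ)).IsHomogeneous 2 :=
      (isHomogeneous_X _ _).mul (isHomogeneous_X _ _)
    exact this.C_mul _


/-- For every `n`, the map `φ*` sends harmonic homogeneous polynomials of
degree `n` in three complex variables to binary forms of degree `2n` (well-definedness),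
it is linear, and it is a bijection from the space of harmonic homogeneous degree-`n`
polynomials onto the space of binary forms of degree `2n`. -/
theorem cartanPullback_bijOn (n : ℕ) :
    (∀ p : MvPolynomial (Fin 3) ℂ, p.IsHomogeneous n →
        (∑ i, pderiv i (pderiv i p)) = 0 → (cartanPullback p).IsHomogeneous (2 * n)) ∧
    (∀ (c : ℂ) (p q : MvPolynomial (Fin 3) ℂ),
        cartanPullback (c • p + q) = c • cartanPullback p + cartanPullback q) ∧
    Set.BijOn cartanPullback
      {p : MvPolynomial (Fin 3) ℂ |
        p.IsHomogeneous n ∧ (∑ i, pderiv i (pderiv i p)) = 0}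
      {q : MvPolynomial (Fin 2) ℂ | q.IsHomogeneous (2 * n)} := by
  refine ⟨fun p hp _ => cartan_homog hp,
    fun c p q => by simp [cartanPullback, map_add, map_smul], ?_, ?_, ?_⟩
  · intro p hp
    exact cartan_homog hp.1
  · intro p₁ h₁ p₂ h₂ heq
    obtain ⟨hh₁, hl₁⟩ := h₁
    obtain ⟨hh₂, hl₂⟩ := h₂
    set q := τmap (p₁ - p₂) with hqdef
    have hθq : θmap q = 0 := by
      rw [← cartan_σ, hqdef, σ_τ]
      show aeval _ (p₁ - p₂) = 0
      rw [map_sub, sub_eq_zero]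
      exact heq
    have hDq : DD q = 0 := by
      have h := lap_σ q
      rw [hqdef, σ_τ] at h
      have hstep : ∀ i : Fin 3, pderiv i (pderiv i (p₁ - p₂))
          = pderiv i (pderiv i p₁) - pderiv i (pderiv i p₂) := by
        intro i; rw [map_sub, map_sub]
      rw [Finset.sum_congr rfl fun i _ => hstep i, Finset.sum_sub_distrib, hl₁, hl₂,
        sub_zero] at h
      have h2 := congrArg τmap h.symm
      rwa [τ_σ, map_zero] at h2
    have hq0 : q = 0 := core_inj q hDq hθq
    have h3 := congrArg σmap hq0
    rw [hqdef, σ_τ, map_zero] at h3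
    exact sub_eq_zero.mp h3
  · intro q hq
    obtain ⟨w, hwh, hwD, hwθ⟩ := core_surj n q hq
    refine ⟨σmap w, ⟨σ_homog hwh, ?_⟩, ?_⟩
    · rw [lap_σ, hwD, map_zero]
    · rw [cartan_σ]
      exact hwθ

end
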